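/- The n-L-exponential function e_n(x) = ∑_{k=0}^∞ x^k / (k!)^{n+1} satisfies the eigenvalue relation D_{nL} e_n(a x) = a · e_n(a x) for every a, x ∈ ℝ, where D_{nL} = (d/dx) x (d/dx) x ⋯ x (d/dx) is the Laguerre operator of order n containing n+1 derivatives. -/

import Mathlib

/-- The operator δ = x·d/dx acting on functions. -/
noncomputable def delta (f : ℝ → ℝ) : ℝ → ℝ := fun x => x * deriv f x

/-- The n-L-exponential function e_n(x) = ∑ xᵏ/(k!)^{n+1}. -/
noncomputable def lexp (n : ℕ) (x : ℝ) : ℝ := ∑' k : ℕ, x ^ k / (k.factorial : ℝ) ^ (n + 1)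

private lemma summable_of_factorial_bound (f : ℕ → ℝ) (C D : ℝ)
    (h : ∀ k, |f k| ≤ C * D ^ k / (k.factorial : ℝ)) : Summable f := by
  apply Summable.of_abs
  refine Summable.of_nonneg_of_le (fun k => abs_nonneg _) h ?_
  simpa [mul_div_assoc] using (Real.summable_pow_div_factorial D).mul_left C

private lemma deriv_term_bound (c : ℕ → ℝ) (C : ℝ) (hC : 2 ≤ C)
    (hc : ∀ k, |c k| ≤ C ^ (k + 1) / (k.factorial : ℝ)) (y R : ℝ) (hy : |y| ≤ R)
    (hR : 1 ≤ R) (k : ℕ) :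
    |(k : ℝ) * c k * y ^ (k - 1)| ≤ C * (2 * C * R) ^ k / (k.factorial : ℝ) := by
  have hC0 : (0:ℝ) < C := lt_of_lt_of_le (by norm_num) hC
  have hR0 : (0:ℝ) < R := lt_of_lt_of_le (by norm_num) hR
  have hfac : (0:ℝ) < (k.factorial : ℝ) := by positivity
  have h1 : |(k : ℝ) * c k * y ^ (k - 1)| = (k:ℝ) * |c k| * |y| ^ (k-1) := by
    rw [abs_mul, abs_mul, abs_pow, Nat.abs_cast]
  have h2 : |y| ^ (k - 1) ≤ R ^ k := by
    calc |y| ^ (k-1) ≤ R ^ (k-1) := pow_le_pow_left₀ (abs_nonneg y) hy _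
    _ ≤ R ^ k := pow_le_pow_right₀ hR (Nat.sub_le k 1)
  have h3 : (k : ℝ) ≤ 2 ^ k := by
    exact_mod_cast (Nat.lt_two_pow_self (n := k)).le
  calc |(k : ℝ) * c k * y ^ (k - 1)|
      = (k:ℝ) * |c k| * |y| ^ (k-1) := h1
    _ ≤ 2 ^ k * (C ^ (k+1) / (k.factorial : ℝ)) * R ^ k := by
        apply mul_le_mul
        · exact mul_le_mul h3 (hc k) (abs_nonneg _) (by positivity)
        · exact h2
        · positivity
        · positivity
    _ = C * (2 * C * R) ^ k / (k.factorial : ℝ) := by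
        rw [mul_pow, mul_pow, pow_succ]
        field_simp

/-- Termwise differentiation of an entire power series with factorial-decay
coefficients. -/
private lemma hasDerivAt_tsum_pow (c : ℕ → ℝ) (C : ℝ) (hC : 2 ≤ C)
    (hc : ∀ k, |c k| ≤ C ^ (k + 1) / (k.factorial : ℝ)) (x : ℝ) :
    HasDerivAt (fun y => ∑' k : ℕ, c k * y ^ k)
      (∑' k : ℕ, (k : ℝ) * c k * x ^ (k - 1)) x := by
  have hC0 : (0:ℝ) < C := lt_of_lt_of_le (by norm_num) hC
  set R : ℝ := |x| + 1 with hRdef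
  have hR : 1 ≤ R := by have := abs_nonneg x; simp only [hRdef]; linarith
  have hR0 : (0:ℝ) < R := by positivity
  set u : ℕ → ℝ := fun k => C * (2 * C * R) ^ k / (k.factorial : ℝ) with hu_def
  have hu : Summable u := by
    simpa [hu_def, mul_div_assoc] using
      (Real.summable_pow_div_factorial (2 * C * R)).mul_left C
  refine hasDerivAt_tsum_of_isPreconnected hu Metric.isOpen_ball
    (convex_ball (0:ℝ) R).isPreconnected
    (y₀ := 0)
    (g := fun k y => c k * y ^ k) (g' := fun k y => (k : ℝ) * c k * y ^ (k - 1))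
    (fun k y _ => ?_) (fun k y hy => ?_) ?_ ?_ ?_
  · have := (hasDerivAt_pow k y).const_mul (c k)
    rw [show (k : ℝ) * c k * y ^ (k - 1) = c k * (↑k * y ^ (k - 1)) by ring]
    exact this
  · have hyR : |y| ≤ R := by
      have := Metric.mem_ball.1 hy
      rw [Real.dist_eq, sub_zero] at this
      exact this.le
    exact deriv_term_bound c C hC hc y R hyR hR k
  · exact Metric.mem_ball.2 (by rw [Real.dist_eq, sub_zero, abs_zero]; exact hR0)
  · refine summable_of_factorial_bound _ C C (fun k => ?_)
    have h0 : |(0:ℝ) ^ k| ≤ 1 := by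
      rcases k with _ | j <;> simp
    calc |c k * 0 ^ k| = |c k| * |(0:ℝ)^k| := abs_mul _ _
      _ ≤ C ^ (k+1) / (k.factorial : ℝ) * 1 :=
          mul_le_mul (hc k) h0 (abs_nonneg _) (by positivity)
      _ = C * C ^ k / (k.factorial : ℝ) := by rw [mul_one, pow_succ]; ring
  · exact Metric.mem_ball.2 (by rw [Real.dist_eq, sub_zero]; simp [hRdef])

private lemma coef_bound (n m : ℕ) (hm : m ≤ n + 1) (a : ℝ) (k : ℕ) :
    |(k:ℝ) ^ m * a ^ k / (k.factorial : ℝ) ^ (n+1)|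
      ≤ (2 * (|a| + 1)) ^ (k + 1) / (k.factorial : ℝ) := by
  set C : ℝ := 2 * (|a| + 1) with hCdef
  have hC : 2 ≤ C := by
    have := abs_nonneg a; simp only [hCdef]; nlinarith
  have hC0 : (0:ℝ) < C := lt_of_lt_of_le (by norm_num) hC
  rcases k with _ | j
  · have h1 : |(↑(0:ℕ):ℝ) ^ m * a ^ 0 / ((Nat.factorial 0 : ℕ) : ℝ) ^ (n+1)| ≤ 1 := by
      simp only [Nat.cast_zero, pow_zero, mul_one, Nat.factorial_zero, Nat.cast_one,
        one_pow, div_one]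
      rcases m with _ | i <;> simp
    refine h1.trans ?_
    simp only [zero_add, pow_one, Nat.factorial_zero, Nat.cast_one, div_one]
    linarith
  · set k := j + 1 with hk
    have hk1 : (1:ℝ) ≤ (k : ℝ) := by exact_mod_cast Nat.one_le_iff_ne_zero.2 (by omega)
    have hjfac : (0:ℝ) < (j.factorial : ℝ) := by positivity
    have hkfac : (0:ℝ) < (k.factorial : ℝ) := by positivity
    have hfac_eq : (k.factorial : ℝ) = (k : ℝ) * (j.factorial : ℝ) := by
      rw [hk]; exact_mod_cast (Nat.factorial_succ j)
    have h1 : |(k:ℝ) ^ m * a ^ k / (k.factorial : ℝ) ^ (n+1)|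
        = (k:ℝ) ^ m * |a| ^ k / (k.factorial : ℝ) ^ (n+1) := by
      rw [abs_div, abs_mul, abs_pow, abs_pow, Nat.abs_cast, abs_pow, Nat.abs_cast]
    rw [h1]
    have h2 : (k:ℝ) ^ m ≤ (k:ℝ) ^ (n+1) := pow_le_pow_right₀ hk1 hm
    have h3 : (k:ℝ) ^ (n+1) / (k.factorial : ℝ) ^ (n+1) ≤ 1 / (j.factorial : ℝ) := by
      rw [← div_pow, hfac_eq]
      have hkne : (k:ℝ) ≠ 0 := by linarith
      have hbase : (k:ℝ) / ((k:ℝ) * (j.factorial : ℝ)) = 1 / (j.factorial : ℝ) := by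
        field_simp
      rw [hbase]
      have hb0 : (0:ℝ) ≤ 1 / (j.factorial : ℝ) := by positivity
      have hb1 : 1 / (j.factorial : ℝ) ≤ 1 := by
        rw [div_le_one hjfac]; exact_mod_cast Nat.one_le_iff_ne_zero.2 (Nat.factorial_ne_zero j)
      calc (1 / (j.factorial : ℝ)) ^ (n+1) ≤ (1 / (j.factorial : ℝ)) ^ 1 :=
            pow_le_pow_of_le_one hb0 hb1 (by omega)
        _ = 1 / (j.factorial : ℝ) := pow_one _
    have h4 : (k:ℝ) ^ m * |a| ^ k / (k.factorial : ℝ) ^ (n+1)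
        ≤ |a| ^ k / (j.factorial : ℝ) := by
      have : (k:ℝ) ^ m / (k.factorial : ℝ) ^ (n+1) ≤ 1 / (j.factorial : ℝ) := by
        calc (k:ℝ) ^ m / (k.factorial : ℝ) ^ (n+1)
            ≤ (k:ℝ) ^ (n+1) / (k.factorial : ℝ) ^ (n+1) :=
              (div_le_div_iff_of_pos_right (by positivity)).2 h2
          _ ≤ 1 / (j.factorial : ℝ) := h3
      calc (k:ℝ) ^ m * |a| ^ k / (k.factorial : ℝ) ^ (n+1)
          = ((k:ℝ) ^ m / (k.factorial : ℝ) ^ (n+1)) * |a| ^ k := by ring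
        _ ≤ (1 / (j.factorial : ℝ)) * |a| ^ k := by
            apply mul_le_mul_of_nonneg_right this (by positivity)
        _ = |a| ^ k / (j.factorial : ℝ) := by ring
    refine h4.trans ?_
    -- |a|^k / j! ≤ C^{k+1} / k!   ⟸   k * |a|^k ≤ C^{k+1}
    rw [div_le_div_iff₀ hjfac hkfac, hfac_eq]
    have hkey : (k:ℝ) * |a| ^ k ≤ C ^ (k+1) := by
      have h2k : (k : ℝ) ≤ 2 ^ k := by exact_mod_cast (Nat.lt_two_pow_self (n := k)).le
      have ha : |a| ^ k ≤ (|a| + 1) ^ k :=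
        pow_le_pow_left₀ (abs_nonneg a) (by linarith) k
      calc (k:ℝ) * |a| ^ k ≤ 2 ^ k * (|a|+1) ^ k :=
            mul_le_mul h2k ha (by positivity) (by positivity)
        _ = C ^ k := by rw [hCdef, mul_pow]
        _ ≤ C ^ (k+1) := pow_le_pow_right₀ (by linarith) (by omega)
    calc |a| ^ k * ((k:ℝ) * (j.factorial : ℝ))
        = ((k:ℝ) * |a| ^ k) * (j.factorial : ℝ) := by ring
      _ ≤ C ^ (k+1) * (j.factorial : ℝ) :=
          mul_le_mul_of_nonneg_right hkey (by positivity)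

private lemma delta_iter_eq (n : ℕ) (a : ℝ) :
    ∀ m, m ≤ n → ∀ x : ℝ, (delta^[m] (fun y => lexp n (a * y))) x
      = ∑' k : ℕ, ((k:ℝ) ^ m * a ^ k / (k.factorial : ℝ) ^ (n+1)) * x ^ k := by
  intro m
  induction m with
  | zero =>
    intro _ x
    simp only [Function.iterate_zero, id_eq, lexp]
    exact tsum_congr fun k => by rw [mul_pow]; ring
  | succ m ih =>
    intro hm x
    have hm' : m ≤ n := by omega
    have hfun : delta^[m] (fun y => lexp n (a * y))
        = fun x => ∑' k : ℕ, ((k:ℝ) ^ m * a ^ k / (k.factorial : ℝ) ^ (n+1)) * x ^ k :=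
      funext (ih hm')
    rw [Function.iterate_succ_apply', delta, hfun]
    set C : ℝ := 2 * (|a| + 1) with hCdef
    have hC : 2 ≤ C := by
      have := abs_nonneg a; simp only [hCdef]; nlinarith
    have hd := (hasDerivAt_tsum_pow
      (fun k => (k:ℝ) ^ m * a ^ k / (k.factorial : ℝ) ^ (n+1)) C hC
      (fun k => coef_bound n m (by omega) a k) x).deriv
    rw [hd, ← tsum_mul_left]
    refine tsum_congr fun k => ?_
    rcases k with _ | j
    · simp
    · simp only [Nat.add_sub_cancel]
      push_cast
      ring

/-- e_n(ax) is an eigenfunction of the Laguerre operator D_{nL} = d/dx ∘ (x d/dx)ⁿ. -/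
theorem laguerre_eigenfunction (n : ℕ) (a x : ℝ) :
    deriv (delta^[n] (fun y => lexp n (a * y))) x = a * lexp n (a * x) := by
  have hfun : delta^[n] (fun y => lexp n (a * y))
      = fun x => ∑' k : ℕ, ((k:ℝ) ^ n * a ^ k / (k.factorial : ℝ) ^ (n+1)) * x ^ k :=
    funext (delta_iter_eq n a n le_rfl)
  rw [hfun]
  set C : ℝ := 2 * (|a| + 1) with hCdef
  have hC : 2 ≤ C := by
    have := abs_nonneg a; simp only [hCdef]; nlinarith
  set c : ℕ → ℝ := fun k => (k:ℝ) ^ n * a ^ k / (k.factorial : ℝ) ^ (n+1) with hcdef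
  have hcb : ∀ k, |c k| ≤ C ^ (k+1) / (k.factorial : ℝ) :=
    fun k => coef_bound n n (by omega) a k
  have hd := (hasDerivAt_tsum_pow c C hC hcb x).deriv
  rw [hd]
  have hs : Summable (fun k : ℕ => (k:ℝ) * c k * x ^ (k - 1)) := by
    refine summable_of_factorial_bound _ C (2 * C * (|x| + 1)) (fun k => ?_)
    exact deriv_term_bound c C hC hcb x (|x| + 1) (by linarith) (by have := abs_nonneg x; linarith) k
  rw [hs.tsum_eq_zero_add]
  simp only [Nat.cast_zero, zero_mul, zero_add]
  rw [lexp, ← tsum_mul_left]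
  refine tsum_congr fun k => ?_
  have hk0 : ((k:ℝ) + 1) ≠ 0 := by positivity
  have hf0 : ((k.factorial : ℝ)) ≠ 0 := by positivity
  simp only [hcdef, Nat.add_sub_cancel, Nat.factorial_succ]
  push_cast
  rw [mul_pow ((k:ℝ)+1) (k.factorial : ℝ), mul_pow a x]
  field_simp
  ring
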